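/- Every edge of the graph T joins two points lying in the interior of the same quadrant of the plane; in particular if e = f ⊕ g then the edges e → f + e and e → e + g stay within the open quadrant containing e. -/
import Mathlib


def det2 (f g : ℤ × ℤ) : ℤ := f.1 * g.2 - f.2 * g.1

def ip2 (f g : ℤ × ℤ) : ℤ := f.1 * g.1 + f.2 * g.2

def IsDAB (f g : ℤ × ℤ) : Prop := det2 f g = 1 ∧ 0 ≤ ip2 f g

/-- `e = f ⊕ g`: the decomposition `e = f + g` with `(f,g)` a direct acute basis. -/
def IsDecomp (e f g : ℤ × ℤ) : Prop := IsDAB f g ∧ e = f + g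

/-- Edge relation of the graph `𝕋`. -/
def TEdge (a b : ℤ × ℤ) : Prop :=
  ∃ f g : ℤ × ℤ, IsDecomp a f g ∧ (b = f + a ∨ b = a + g)

lemma key_nonneg (f1 f2 g1 g2 : ℤ) (hd : f1 * g2 - f2 * g1 = 1)
    (hip : 0 ≤ f1 * g1 + f2 * g2) : 0 ≤ f1 * g1 ∧ 0 ≤ f2 * g2 := by
  have hb : 0 ≤ (f2 * g1) * (f2 * g1 + 1) := by
    rcases le_or_gt 0 (f2 * g1) with h | h
    · positivity
    · nlinarith
  have hfg : f1 * g2 = f2 * g1 + 1 := by linarith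
  have hprod : 0 ≤ (f1 * g1) * (f2 * g2) := by
    have heq : (f1 * g1) * (f2 * g2) = (f2 * g1) * (f2 * g1 + 1) := by
      rw [← hfg]; ring
    linarith [heq, hb]
  constructor
  · rcases le_or_gt 0 (f1 * g1) with h | h
    · exact h
    · nlinarith
  · rcases le_or_gt 0 (f2 * g2) with h | h
    · exact h
    · nlinarith

lemma coord (x y : ℤ) (hxy : 0 ≤ x * y) (hne : x + y ≠ 0) :
    ∃ α : ℤ, (α = 1 ∨ α = -1) ∧ 0 < α * (x + y) ∧ 0 < α * (x + (x + y)) ∧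
      0 < α * ((x + y) + y) := by
  rcases lt_or_gt_of_ne hne with h | h
  · refine ⟨-1, Or.inr rfl, by linarith, ?_, ?_⟩
    · have hx : x ≤ 0 := by
        by_contra hx
        push_neg at hx
        have hy : y < 0 := by nlinarith
        nlinarith
      linarith
    · have hy : y ≤ 0 := by
        by_contra hy
        push_neg at hy
        have hx : x < 0 := by nlinarith
        nlinarith
      linarith
  · refine ⟨1, Or.inl rfl, by linarith, ?_, ?_⟩
    · have hx : 0 ≤ x := by
        by_contra hx
        push_neg at hx
        have hy : y ≤ 0 := by nlinarith
        linarith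
      linarith
    · have hy : 0 ≤ y := by
        by_contra hy
        push_neg at hy
        have hx : x ≤ 0 := by nlinarith
        linarith
      linarith

lemma main2 (e f g : ℤ × ℤ) (h : IsDecomp e f g) :
    ∃ α β : ℤ, (α = 1 ∨ α = -1) ∧ (β = 1 ∨ β = -1) ∧
      0 < α * e.1 ∧ 0 < β * e.2 ∧
      0 < α * (f + e).1 ∧ 0 < β * (f + e).2 ∧
      0 < α * (e + g).1 ∧ 0 < β * (e + g).2 := by
  obtain ⟨⟨hd, hip⟩, he⟩ := h
  subst he
  simp only [det2, ip2] at hd hip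
  obtain ⟨h1, h2⟩ := key_nonneg f.1 f.2 g.1 g.2 hd hip
  have hne1 : f.1 + g.1 ≠ 0 := by
    intro h0
    have hf : f.1 = -g.1 := by omega
    have hg : g.1 = 0 := by nlinarith
    have hfz : f.1 = 0 := by omega
    rw [hfz, hg] at hd; simp at hd
  have hne2 : f.2 + g.2 ≠ 0 := by
    intro h0
    have hf : f.2 = -g.2 := by omega
    have hg : g.2 = 0 := by nlinarith
    have hfz : f.2 = 0 := by omega
    rw [hfz, hg] at hd; simp at hd
  obtain ⟨α, hα, ha1, ha2, ha3⟩ := coord f.1 g.1 h1 hne1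
  obtain ⟨β, hβ, hb1, hb2, hb3⟩ := coord f.2 g.2 h2 hne2
  refine ⟨α, β, hα, hβ, ?_, ?_, ?_, ?_, ?_, ?_⟩ <;>
    simp only [Prod.fst_add, Prod.snd_add] <;> linarith

theorem stmt19_edges_in_open_quadrant :
    (∀ a b : ℤ × ℤ, TEdge a b →
      ∃ α β : ℤ, (α = 1 ∨ α = -1) ∧ (β = 1 ∨ β = -1) ∧
        0 < α * a.1 ∧ 0 < β * a.2 ∧ 0 < α * b.1 ∧ 0 < β * b.2) ∧
    (∀ e f g : ℤ × ℤ, IsDecomp e f g →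
      ∃ α β : ℤ, (α = 1 ∨ α = -1) ∧ (β = 1 ∨ β = -1) ∧
        0 < α * e.1 ∧ 0 < β * e.2 ∧
        0 < α * (f + e).1 ∧ 0 < β * (f + e).2 ∧
        0 < α * (e + g).1 ∧ 0 < β * (e + g).2) := by
  refine ⟨?_, main2⟩
  rintro a b ⟨f, g, hdec, hb | hb⟩ <;>
    obtain ⟨α, β, hα, hβ, p1, p2, p3, p4, p5, p6⟩ := main2 a f g hdec <;> subst hb
  · exact ⟨α, β, hα, hβ, p1, p2, p3, p4⟩
  · exact ⟨α, β, hα, hβ, p1, p2, p5, p6⟩
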